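/- Let Φ ∈ ℂ^{N×r} have full column rank and let V_and ∈ ℂ^{r×M} have full row rank. Then the function b ↦ ‖X − Φ diag(b) V_and‖_F² is a strictly convex quadratic in b ∈ ℂ^r whose unique minimizer solves the linear system ((Φ*Φ) ∘ conj(V_and V_and*)) b = conj(diag(V_and X* Φ)), where ∘ denotes the Hadamard product. -/

import Mathlib

open Matrix

namespace OptDMDAux

variable {N r M : ℕ}

/-- The linear map `b ↦ Φ * diagonal b * Vand`, viewed as a map into
Euclidean space (so that the Frobenius norm is the Euclidean norm). -/
noncomputable def T (Φ : Matrix (Fin N) (Fin r) ℂ) (Vand : Matrix (Fin r) (Fin M) ℂ) :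
    (Fin r → ℂ) →ₗ[ℂ] EuclideanSpace ℂ (Fin N × Fin M) where
  toFun b := WithLp.toLp 2 (fun p : Fin N × Fin M => (Φ * Matrix.diagonal b * Vand) p.1 p.2)
  map_add' b c := by
    ext p
    show (Φ * Matrix.diagonal (b + c) * Vand) p.1 p.2 = _
    have hd : Matrix.diagonal (b + c) = Matrix.diagonal b + Matrix.diagonal c :=
      (Matrix.diagonal_add b c).symm
    rw [hd, Matrix.mul_add, Matrix.add_mul]
    rfl
  map_smul' a b := by
    ext p
    show (Φ * Matrix.diagonal (a • b) * Vand) p.1 p.2 = _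
    have hd : Matrix.diagonal (a • b) = a • Matrix.diagonal b :=
      Matrix.diagonal_smul a b
    rw [hd, Matrix.mul_smul, Matrix.smul_mul]
    rfl

theorem T_apply (Φ : Matrix (Fin N) (Fin r) ℂ) (Vand : Matrix (Fin r) (Fin M) ℂ)
    (b : Fin r → ℂ) (p : Fin N × Fin M) :
    T Φ Vand b p = ∑ k, Φ p.1 k * b k * Vand k p.2 := by
  show (Φ * Matrix.diagonal b * Vand) p.1 p.2 = _
  simp [Matrix.mul_apply, Matrix.diagonal_apply, ite_mul, zero_mul, Finset.sum_ite_eq, mul_ite, mul_zero]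

theorem T_inj (Φ : Matrix (Fin N) (Fin r) ℂ) (hΦ : Function.Injective Φ.mulVec)
    (Vand : Matrix (Fin r) (Fin M) ℂ)
    (hVand : ∀ c : Fin r → ℂ, Vand.vecMul c = 0 → c = 0)
    (b : Fin r → ℂ) (hb : T Φ Vand b = 0) : b = 0 := by
  have h1 : ∀ m : Fin M, (fun k => b k * Vand k m) = 0 := by
    intro m
    apply hΦ
    rw [Matrix.mulVec_zero]
    funext n
    have : T Φ Vand b (n, m) = 0 := by rw [hb]; rfl
    rw [T_apply] at this
    simpa [Matrix.mulVec, dotProduct, mul_assoc] using this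
  apply hVand
  funext m
  have := congrFun (h1 m)
  simp only [Matrix.vecMul, dotProduct, Pi.zero_apply] at *
  exact Finset.sum_eq_zero fun k _ => this k

theorem swap3 {α β γ : Type*} [Fintype α] [Fintype β] [Fintype γ] (g : α → β → γ → ℂ) :
    ∑ n : α, ∑ m : β, ∑ j : γ, g n m j = ∑ j : γ, ∑ n : α, ∑ m : β, g n m j := by
  have h1 : ∑ n : α, ∑ m : β, ∑ j : γ, g n m j = ∑ n : α, ∑ j : γ, ∑ m : β, g n m j :=
    Finset.sum_congr rfl fun n _ => Finset.sum_comm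
  rw [h1]
  exact Finset.sum_comm

theorem inner_single_T (Φ : Matrix (Fin N) (Fin r) ℂ) (Vand : Matrix (Fin r) (Fin M) ℂ)
    (b : Fin r → ℂ) (i : Fin r)
    (u v : EuclideanSpace ℂ (Fin N × Fin M))
    (hu : ∀ p, u p = Φ p.1 i * Vand i p.2)
    (hv : ∀ p, v p = ∑ k, Φ p.1 k * b k * Vand k p.2) :
    (inner ℂ u v : ℂ)
      = (Matrix.hadamard (Φᴴ * Φ) ((Vand * Vandᴴ).map star)).mulVec b i := by
  calc (inner ℂ u v : ℂ)
      = ∑ n, ∑ m, ∑ j, (starRingEnd ℂ) (Φ n i) * (starRingEnd ℂ) (Vand i m)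
          * (Φ n j * b j * Vand j m) := by
        simp only [PiLp.inner_apply, RCLike.inner_apply', hu, hv, Fintype.sum_prod_type,
          _root_.map_mul, Finset.mul_sum]
    _ = ∑ j, ∑ n, ∑ m, (starRingEnd ℂ) (Φ n i) * (starRingEnd ℂ) (Vand i m)
          * (Φ n j * b j * Vand j m) := swap3 _
    _ = (Matrix.hadamard (Φᴴ * Φ) ((Vand * Vandᴴ).map star)).mulVec b i := by
        simp only [Matrix.mulVec, dotProduct, Matrix.hadamard_apply, Matrix.map_apply,
          Matrix.mul_apply, Matrix.conjTranspose_apply, star_sum, star_mul', star_star,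
          Finset.sum_mul, Finset.mul_sum]
        refine Finset.sum_congr rfl fun j _ => ?_
        rw [Finset.sum_comm]
        refine Finset.sum_congr rfl fun n _ => ?_
        refine Finset.sum_congr rfl fun m _ => ?_
        simp only [starRingEnd_apply]
        ring

theorem inner_single_x (Φ : Matrix (Fin N) (Fin r) ℂ) (Vand : Matrix (Fin r) (Fin M) ℂ)
    (X : Matrix (Fin N) (Fin M) ℂ) (i : Fin r)
    (u x : EuclideanSpace ℂ (Fin N × Fin M))
    (hu : ∀ p, u p = Φ p.1 i * Vand i p.2)
    (hx : ∀ p, x p = X p.1 p.2) :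
    (inner ℂ u x : ℂ) = star ((Vand * Xᴴ * Φ) i i) := by
  simp only [PiLp.inner_apply, RCLike.inner_apply', hu, hx, Fintype.sum_prod_type,
    _root_.map_mul]
  simp only [Matrix.mul_apply, Matrix.conjTranspose_apply, star_sum, star_mul', star_star,
    Finset.sum_mul, Finset.mul_sum]
  refine Finset.sum_congr rfl fun n _ => ?_
  refine Finset.sum_congr rfl fun m _ => ?_
  simp only [starRingEnd_apply]
  ring

theorem sc_key {E : Type*} [NormedAddCommGroup E] [InnerProductSpace ℂ E]
    (u w : E) (huw : u ≠ w) {a b : ℝ} (ha : 0 < a) (hb : 0 < b) (hab : a + b = 1) :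
    ‖(a : ℂ) • u + (b : ℂ) • w‖ ^ 2 < a * ‖u‖ ^ 2 + b * ‖w‖ ^ 2 := by
  have h1 : ‖(a : ℂ) • u + (b : ℂ) • w‖ ^ 2
      = a ^ 2 * ‖u‖ ^ 2 + 2 * (a * b * Complex.re (inner ℂ u w)) + b ^ 2 * ‖w‖ ^ 2 := by
    rw [@norm_add_sq ℂ]
    rw [inner_smul_left, inner_smul_right, norm_smul, norm_smul]
    simp [Complex.norm_real, abs_of_pos ha, abs_of_pos hb, Complex.conj_ofReal,
      ← Complex.ofReal_mul, mul_pow, Complex.re_ofReal_mul]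
    ring
  have h2 : ‖u - w‖ ^ 2 = ‖u‖ ^ 2 - 2 * Complex.re (inner ℂ u w) + ‖w‖ ^ 2 := by
    rw [@norm_sub_sq ℂ]
    simp [RCLike.re_to_complex]
  have h3 : 0 < ‖u - w‖ ^ 2 :=
    pow_pos (norm_pos_iff.mpr (sub_ne_zero.mpr huw)) 2
  have h4 : 0 < a * b * (‖u‖ ^ 2 - 2 * Complex.re (inner ℂ u w) + ‖w‖ ^ 2) := by
    rw [← h2]; exact mul_pos (mul_pos ha hb) h3
  have hb1 : b = 1 - a := by linarith
  subst hb1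
  nlinarith [h4, h1]

theorem f_eq (X : Matrix (Fin N) (Fin M) ℂ) (Φ : Matrix (Fin N) (Fin r) ℂ)
    (Vand : Matrix (Fin r) (Fin M) ℂ) (x : EuclideanSpace ℂ (Fin N × Fin M))
    (hx : ∀ p, x p = X p.1 p.2) (b : Fin r → ℂ) :
    ∑ i, ∑ j, Complex.normSq ((X - Φ * Matrix.diagonal b * Vand) i j)
      = ‖x - T Φ Vand b‖ ^ 2 := by
  rw [EuclideanSpace.norm_eq, Real.sq_sqrt (Finset.sum_nonneg fun _ _ => sq_nonneg _),
    Fintype.sum_prod_type]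
  refine Finset.sum_congr rfl fun i _ => Finset.sum_congr rfl fun j _ => ?_
  have h : (x - T Φ Vand b) (i, j) = (X - Φ * Matrix.diagonal b * Vand) i j := by
    show x (i, j) - T Φ Vand b (i, j) = X i j - (Φ * Matrix.diagonal b * Vand) i j
    rw [hx]
    rfl
  rw [h, Complex.normSq_eq_norm_sq]

end OptDMDAux

/-- Optimal DMD amplitudes: for DMD modes `Φ` with full column rank and a
Vandermonde matrix `V_and` with full row rank, the map
`b ↦ ‖X − Φ diag(b) V_and‖_F²` is a strictly convex quadratic with a unique
minimizer, and the minimizer satisfies the linear system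
`((Φ*Φ) ∘ conj(V_and V_and*)) b = conj(diag(V_and X* Φ))`. -/
theorem optimal_dmd_amplitudes {N r M : ℕ}
    (X : Matrix (Fin N) (Fin M) ℂ)
    (Φ : Matrix (Fin N) (Fin r) ℂ) (hΦ : Function.Injective Φ.mulVec)
    (Vand : Matrix (Fin r) (Fin M) ℂ)
    (hVand : ∀ c : Fin r → ℂ, Vand.vecMul c = 0 → c = 0)
    (f : (Fin r → ℂ) → ℝ)
    (hf : f = fun b => ∑ i, ∑ j,
      Complex.normSq ((X - Φ * Matrix.diagonal b * Vand) i j)) :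
    StrictConvexOn ℝ Set.univ f ∧
    (∃! b : Fin r → ℂ, ∀ b' : Fin r → ℂ, f b ≤ f b') ∧
    (∀ b : Fin r → ℂ, (∀ b' : Fin r → ℂ, f b ≤ f b') →
      (Matrix.hadamard (Φᴴ * Φ) ((Vand * Vandᴴ).map star)).mulVec b
        = fun i => star ((Vand * Xᴴ * Φ) i i)) := by
  classical
  open OptDMDAux in
  set x : EuclideanSpace ℂ (Fin N × Fin M) := WithLp.toLp 2 (fun p : Fin N × Fin M => X p.1 p.2) with hxdef
  have hx : ∀ p, x p = X p.1 p.2 := fun _ => rfl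
  have hfT : ∀ b, f b = ‖x - T Φ Vand b‖ ^ 2 := by
    intro b
    rw [hf]
    exact f_eq X Φ Vand x hx b
  -- injectivity of T as a function
  have hTinj : Function.Injective (T Φ Vand) := by
    intro p q h
    have h0 : T Φ Vand (p - q) = 0 := by rw [map_sub, h, sub_self]
    have := T_inj Φ hΦ Vand hVand (p - q) h0
    exact sub_eq_zero.mp this
  -- expansion of f around a point
  have hexp : ∀ b c : Fin r → ℂ,
      ‖x - T Φ Vand (b + c)‖ ^ 2
        = ‖x - T Φ Vand b‖ ^ 2
          - 2 * Complex.re (inner ℂ (x - T Φ Vand b) (T Φ Vand c) : ℂ)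
          + ‖T Φ Vand c‖ ^ 2 := by
    intro b c
    have h : x - T Φ Vand (b + c) = (x - T Φ Vand b) - T Φ Vand c := by
      rw [map_add]; abel
    rw [h, @norm_sub_sq ℂ]
    simp [RCLike.re_to_complex]
    rw [inner_sub_left, Complex.sub_re]
  -- the orthogonal projection gives a minimizer b₀
  set K : Submodule ℂ (EuclideanSpace ℂ (Fin N × Fin M)) := LinearMap.range (T Φ Vand) with hK
  have hmem0 : ((K.orthogonalProjectionOnto x : K) : EuclideanSpace ℂ (Fin N × Fin M)) ∈ K :=
    (K.orthogonalProjectionOnto x).2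
  obtain ⟨b₀, hb₀⟩ := LinearMap.mem_range.mp hmem0
  have horth : ∀ c : Fin r → ℂ, (inner ℂ (T Φ Vand c) (x - T Φ Vand b₀) : ℂ) = 0 := by
    intro c
    have hmem : T Φ Vand c ∈ K := LinearMap.mem_range.mpr ⟨c, rfl⟩
    have h0 : (inner ℂ (x - ((K.orthogonalProjectionOnto x : K) : EuclideanSpace ℂ (Fin N × Fin M))) (T Φ Vand c) : ℂ) = 0 :=
        K.starProjection_inner_eq_zero x (T Φ Vand c) hmem
    rw [← hb₀] at h0
    rw [← inner_conj_symm, h0, map_zero]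
  have horth' : ∀ c : Fin r → ℂ, (inner ℂ (x - T Φ Vand b₀) (T Φ Vand c) : ℂ) = 0 := by
    intro c
    rw [← inner_conj_symm, horth c, map_zero]
  -- b₀ is a minimizer
  have hmin : ∀ b' : Fin r → ℂ, f b₀ ≤ f b' := by
    intro b'
    rw [hfT, hfT]
    have h := hexp b₀ (b' - b₀)
    rw [add_sub_cancel] at h
    rw [h, horth' (b' - b₀)]
    simp only [Complex.zero_re, mul_zero, sub_zero]
    nlinarith [sq_nonneg ‖T Φ Vand (b' - b₀)‖]
  -- any minimizer equals b₀
  have huniq : ∀ b : Fin r → ℂ, (∀ b' : Fin r → ℂ, f b ≤ f b') → b = b₀ := by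
    intro b hb
    have h1 : f b = f b₀ := le_antisymm (hb b₀) (hmin b)
    have h := hexp b₀ (b - b₀)
    rw [add_sub_cancel] at h
    rw [horth' (b - b₀)] at h
    simp only [Complex.zero_re, mul_zero, sub_zero] at h
    have h2 : ‖T Φ Vand (b - b₀)‖ ^ 2 = 0 := by
      rw [hfT, hfT] at h1
      linarith [h1, h]
    have h3 : T Φ Vand (b - b₀) = 0 := by
      have := pow_eq_zero_iff (n := 2) (by norm_num) |>.mp h2
      exact norm_eq_zero.mp this
    have := T_inj Φ hΦ Vand hVand (b - b₀) h3
    exact sub_eq_zero.mp this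
  refine ⟨?_, ⟨b₀, hmin, fun b hb => huniq b hb⟩, ?_⟩
  · -- strict convexity
    refine ⟨convex_univ, ?_⟩
    intro b1 _ b2 _ hne a b ha hb hab
    rw [hfT, hfT, hfT]
    have hsm1 : ∀ (t : ℝ) (v : Fin r → ℂ), t • v = (t : ℂ) • v := by
      intro t v
      funext k
      simp [Complex.real_smul]
    have e1 : T Φ Vand (a • b1 + b • b2)
        = (a : ℂ) • T Φ Vand b1 + (b : ℂ) • T Φ Vand b2 := by
      rw [map_add, hsm1 a b1, hsm1 b b2, LinearMap.map_smul, LinearMap.map_smul]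
    have hb' : (b : ℂ) = 1 - (a : ℂ) := by
      have : b = 1 - a := by linarith
      rw [this]; push_cast; ring
    have e2 : x - T Φ Vand (a • b1 + b • b2)
        = (a : ℂ) • (x - T Φ Vand b1) + (b : ℂ) • (x - T Φ Vand b2) := by
      rw [e1, hb']
      module
    rw [e2]
    have huw : x - T Φ Vand b1 ≠ x - T Φ Vand b2 := fun hcontra =>
      hne (hTinj (sub_right_injective hcontra))
    exact sc_key _ _ huw ha hb hab
  · -- the normal equations
    intro b hb
    have hbeq : b = b₀ := huniq b hb
    subst hbeq
    funext i
    set u : EuclideanSpace ℂ (Fin N × Fin M) := T Φ Vand (Pi.single i 1) with hudef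
    have hu : ∀ p, u p = Φ p.1 i * Vand i p.2 := by
      intro p
      rw [hudef, T_apply]
      simp [Pi.single_apply, ite_mul, mul_ite, mul_zero, zero_mul, mul_one]
    have hv : ∀ p, T Φ Vand b p = ∑ k, Φ p.1 k * b k * Vand k p.2 :=
      fun p => T_apply Φ Vand b p
    have h1 : (inner ℂ u (T Φ Vand b) : ℂ)
        = (Matrix.hadamard (Φᴴ * Φ) ((Vand * Vandᴴ).map star)).mulVec b i :=
      inner_single_T Φ Vand b i u (T Φ Vand b) hu hv
    have h2 : (inner ℂ u x : ℂ) = star ((Vand * Xᴴ * Φ) i i) :=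
      inner_single_x Φ Vand X i u x hu hx
    have h3 : (inner ℂ u (x - T Φ Vand b) : ℂ) = 0 := horth (Pi.single i 1)
    rw [inner_sub_right] at h3
    have h4 : (inner ℂ u x : ℂ) = (inner ℂ u (T Φ Vand b) : ℂ) := by
      have := sub_eq_zero.mp h3
      exact this
    rw [← h1, ← h4, h2]
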